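/- arXiv:1704.01505 — 4 statements merged into one kernel-verified Lean document; each statement's English description precedes it below -/
import Mathlib

section
/- Let μ ∈ P₂(ℝᵈ), ν₀, ν₁ ∈ P₂(ℝᵈ), and suppose T₀, T₁ : ℝᵈ → ℝᵈ are Borel maps with T₀#μ = ν₀, T₁#μ = ν₁ realizing the optimal quadratic transport cost, i.e. ∫|Tᵢ(x)-x|² dμ = W₂²(μ, νᵢ). Then for α ∈ [0,1], setting T_α(x) = (1-α)T₀(x) + αT₁(x), one has W₂²(μ, T_α#μ) ≤ (1-α)W₂²(μ, ν₀) + α W₂²(μ, ν₁) - α(1-α)W₂²(ν₀, ν₁). -/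
open MeasureTheory ENNReal Filter Topology Set RealInnerProductSpace

noncomputable section

abbrev Evec (d : ℕ) := EuclideanSpace ℝ (Fin d)

/-- `π` is a coupling of `μ` and `ν`. -/
def IsCoupling {d : ℕ} (π : Measure (Evec d × Evec d)) (μ ν : Measure (Evec d)) : Prop :=
  π.map Prod.fst = μ ∧ π.map Prod.snd = ν

/-- Squared 2-Wasserstein distance. -/
noncomputable def W2sq {d : ℕ} (μ ν : Measure (Evec d)) : ℝ≥0∞ :=
  sInf { c | ∃ π : Measure (Evec d × Evec d), IsProbabilityMeasure π ∧ IsCoupling π μ ν ∧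
    c = ∫⁻ p, (‖p.1 - p.2‖₊ : ℝ≥0∞) ^ 2 ∂π }

/-- 2-Wasserstein distance. -/
noncomputable def W2 {d : ℕ} (μ ν : Measure (Evec d)) : ℝ≥0∞ :=
  W2sq μ ν ^ (1/2 : ℝ)

/-- Finite second moment. -/
def FiniteSecondMoment {d : ℕ} (μ : Measure (Evec d)) : Prop :=
  ∫⁻ x, (‖x‖₊ : ℝ≥0∞) ^ 2 ∂μ < ∞


lemma nnnorm_sub_rev' {d : ℕ} (a b : Evec d) : ‖a - b‖₊ = ‖b - a‖₊ := by
  rw [← neg_sub, nnnorm_neg]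

lemma W2sq_le_map_map {d : ℕ} (μ : Measure (Evec d)) [IsProbabilityMeasure μ]
    (S T : Evec d → Evec d) (hS : Measurable S) (hT : Measurable T) :
    W2sq (μ.map S) (μ.map T) ≤ ∫⁻ x, (‖S x - T x‖₊ : ℝ≥0∞) ^ 2 ∂μ := by
  apply sInf_le
  refine ⟨μ.map (fun x => (S x, T x)), ?_, ⟨?_, ?_⟩, ?_⟩
  · exact Measure.isProbabilityMeasure_map (hS.prodMk hT).aemeasurable
  · rw [Measure.map_map measurable_fst (hS.prodMk hT)]; rfl
  · rw [Measure.map_map measurable_snd (hS.prodMk hT)]; rfl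
  · rw [lintegral_map (f := fun p : Evec d × Evec d => (‖p.1 - p.2‖₊ : ℝ≥0∞) ^ 2) ((measurable_fst.sub measurable_snd).enorm.pow_const 2)
      (hS.prodMk hT)]

lemma W2sq_le_map {d : ℕ} (μ : Measure (Evec d)) [IsProbabilityMeasure μ]
    (T : Evec d → Evec d) (hT : Measurable T) :
    W2sq μ (μ.map T) ≤ ∫⁻ x, (‖T x - x‖₊ : ℝ≥0∞) ^ 2 ∂μ := by
  have := W2sq_le_map_map μ id T measurable_id hT
  rw [Measure.map_id] at this
  simpa [nnnorm_sub_rev'] using this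

lemma coe2 {d : ℕ} (w : Evec d) : (‖w‖₊ : ℝ≥0∞) ^ 2 = ENNReal.ofReal (‖w‖ ^ 2) := by
  rw [ENNReal.ofReal_pow (norm_nonneg w), ofReal_norm, enorm_eq_nnnorm]

lemma real_identity {d : ℕ} (α : ℝ) (u v : Evec d) :
    ‖(1 - α) • u + α • v‖ ^ 2 + (α * (1 - α)) * ‖u - v‖ ^ 2
      = (1 - α) * ‖u‖ ^ 2 + α * ‖v‖ ^ 2 := by
  simp only [@norm_add_sq_real, @norm_sub_sq_real, norm_smul, real_inner_smul_left,
    real_inner_smul_right, mul_pow, Real.norm_eq_abs, sq_abs]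
  ring

theorem W2sq_convex_generalized_geodesic {d : ℕ} (μ ν₀ ν₁ : Measure (Evec d))
    [IsProbabilityMeasure μ] [IsProbabilityMeasure ν₀] [IsProbabilityMeasure ν₁]
    (hμ : FiniteSecondMoment μ) (h0 : FiniteSecondMoment ν₀) (h1 : FiniteSecondMoment ν₁)
    (T₀ T₁ : Evec d → Evec d) (hT₀m : Measurable T₀) (hT₁m : Measurable T₁)
    (hT₀ : μ.map T₀ = ν₀) (hT₁ : μ.map T₁ = ν₁)
    (hopt₀ : ∫⁻ x, (‖T₀ x - x‖₊ : ℝ≥0∞) ^ 2 ∂μ = W2sq μ ν₀)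
    (hopt₁ : ∫⁻ x, (‖T₁ x - x‖₊ : ℝ≥0∞) ^ 2 ∂μ = W2sq μ ν₁)
    (α : ℝ) (hα : α ∈ Icc (0:ℝ) 1) :
    W2sq μ (μ.map (fun x => (1 - α) • T₀ x + α • T₁ x))
        + ENNReal.ofReal (α * (1 - α)) * W2sq ν₀ ν₁
      ≤ ENNReal.ofReal (1 - α) * W2sq μ ν₀ + ENNReal.ofReal α * W2sq μ ν₁ := by
  obtain ⟨hα0, hα1⟩ := hα
  have h1α : (0:ℝ) ≤ 1 - α := by linarith
  set Tα : Evec d → Evec d := fun x => (1 - α) • T₀ x + α • T₁ x with hTα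
  have hTαm : Measurable Tα := ((hT₀m.const_smul (1 - α)).add (hT₁m.const_smul α))
  have key : ∀ x, (‖Tα x - x‖₊ : ℝ≥0∞) ^ 2
        + ENNReal.ofReal (α * (1 - α)) * (‖T₀ x - T₁ x‖₊ : ℝ≥0∞) ^ 2
      = ENNReal.ofReal (1 - α) * (‖T₀ x - x‖₊ : ℝ≥0∞) ^ 2
        + ENNReal.ofReal α * (‖T₁ x - x‖₊ : ℝ≥0∞) ^ 2 := by
    intro x
    have hvec : Tα x - x = (1 - α) • (T₀ x - x) + α • (T₁ x - x) := by
      simp only [hTα]; module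
    have hvec2 : T₀ x - T₁ x = (T₀ x - x) - (T₁ x - x) := by abel
    rw [coe2, coe2, coe2, coe2, hvec, hvec2,
      ← ENNReal.ofReal_mul (mul_nonneg hα0 h1α),
      ← ENNReal.ofReal_mul h1α, ← ENNReal.ofReal_mul hα0,
      ← ENNReal.ofReal_add (sq_nonneg _) (mul_nonneg (mul_nonneg hα0 h1α) (sq_nonneg _)),
      ← ENNReal.ofReal_add (mul_nonneg h1α (sq_nonneg _)) (mul_nonneg hα0 (sq_nonneg _))]
    exact congrArg _ (real_identity α _ _)
  have m0 : Measurable fun x => (‖T₀ x - x‖₊ : ℝ≥0∞) ^ 2 :=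
    (hT₀m.sub measurable_id).enorm.pow_const 2
  have m1 : Measurable fun x => (‖T₁ x - x‖₊ : ℝ≥0∞) ^ 2 :=
    (hT₁m.sub measurable_id).enorm.pow_const 2
  have m01 : Measurable fun x => (‖T₀ x - T₁ x‖₊ : ℝ≥0∞) ^ 2 :=
    (hT₀m.sub hT₁m).enorm.pow_const 2
  have hint : ∫⁻ x, (‖Tα x - x‖₊ : ℝ≥0∞) ^ 2 ∂μ
        + ENNReal.ofReal (α * (1 - α)) * ∫⁻ x, (‖T₀ x - T₁ x‖₊ : ℝ≥0∞) ^ 2 ∂μ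
      = ENNReal.ofReal (1 - α) * W2sq μ ν₀ + ENNReal.ofReal α * W2sq μ ν₁ := by
    rw [← hopt₀, ← hopt₁, ← lintegral_const_mul _ m01, ← lintegral_const_mul _ m0,
      ← lintegral_const_mul _ m1,
      ← lintegral_add_right _ (m01.const_mul _),
      ← lintegral_add_right _ (m1.const_mul _)]
    exact lintegral_congr key
  calc W2sq μ (μ.map Tα) + ENNReal.ofReal (α * (1 - α)) * W2sq ν₀ ν₁
      ≤ ∫⁻ x, (‖Tα x - x‖₊ : ℝ≥0∞) ^ 2 ∂μ
        + ENNReal.ofReal (α * (1 - α)) * ∫⁻ x, (‖T₀ x - T₁ x‖₊ : ℝ≥0∞) ^ 2 ∂μ := by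
        refine add_le_add (W2sq_le_map μ Tα hTαm) (mul_le_mul_right ?_ _)
        rw [← hT₀, ← hT₁]
        exact W2sq_le_map_map μ T₀ T₁ hT₀m hT₁m
    _ = _ := hint
end
end

section
/- Let μ ∈ P₂(ℝᵈ), ν₀, ν₁ ∈ P₂(ℝᵈ) with optimal transport maps T₀ from μ to ν₀ and T₀₁ from ν₀ to ν₁ (i.e. these maps realize the respective W₂ costs). Then for α ∈ [0,1] and ν_α := ((1-α)Id + αT₀₁)#ν₀ (the displacement interpolation), W₂²(μ, ν_α) ≥ (1-α)W₂²(μ, ν₀) + α W₂²(μ, ν₁) - α(1-α)W₂²(ν₀, ν₁); i.e. ν ↦ -W₂²(μ, ν) is displacement convex. -/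
open MeasureTheory ENNReal Filter Topology Set RealInnerProductSpace ProbabilityTheory

noncomputable section

lemma real_key {d : ℕ} (α : ℝ) (u v : EuclideanSpace ℝ (Fin d)) :
    (1-α)*‖u‖^2 + α*‖v‖^2 = ‖(1-α)•u + α•v‖^2 + (α*(1-α))*‖u-v‖^2 := by
  have h1 := @norm_add_sq_real _ _ _ ((1-α)•u) (α•v)
  have h2 := @norm_sub_sq_real _ _ _ u v
  simp only [real_inner_smul_left, real_inner_smul_right, norm_smul, Real.norm_eq_abs,
    mul_pow, sq_abs] at h1
  nlinarith [h1, h2]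


theorem neg_W2sq_displacement_convex {d : ℕ} (μ ν₀ ν₁ : Measure (Evec d))
    [IsProbabilityMeasure μ] [IsProbabilityMeasure ν₀] [IsProbabilityMeasure ν₁]
    (hμ : FiniteSecondMoment μ) (h0 : FiniteSecondMoment ν₀) (h1 : FiniteSecondMoment ν₁)
    (T₀ T₀₁ : Evec d → Evec d) (hT₀m : Measurable T₀) (hT₀₁m : Measurable T₀₁)
    (hT₀ : μ.map T₀ = ν₀) (hT₀₁ : ν₀.map T₀₁ = ν₁)
    (hopt₀ : ∫⁻ x, (‖T₀ x - x‖₊ : ℝ≥0∞) ^ 2 ∂μ = W2sq μ ν₀)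
    (hopt₀₁ : ∫⁻ x, (‖T₀₁ x - x‖₊ : ℝ≥0∞) ^ 2 ∂ν₀ = W2sq ν₀ ν₁)
    (α : ℝ) (hα : α ∈ Icc (0:ℝ) 1) :
    ENNReal.ofReal (1 - α) * W2sq μ ν₀ + ENNReal.ofReal α * W2sq μ ν₁
        - ENNReal.ofReal (α * (1 - α)) * W2sq ν₀ ν₁
      ≤ W2sq μ (ν₀.map (fun x => (1 - α) • x + α • T₀₁ x)) := by
  obtain ⟨hα0, hα1⟩ := hα
  have hα1' : (0:ℝ) ≤ 1 - α := by linarith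
  set Tα : Evec d → Evec d := fun x => (1 - α) • x + α • T₀₁ x with hTαdef
  have hTαm : Measurable Tα := (measurable_id.const_smul (1 - α)).add (hT₀₁m.const_smul α)
  refine le_sInf ?_
  rintro c ⟨σ, hσp, ⟨hσ1, hσ2⟩, rfl⟩
  set σ' := σ.map Prod.swap with hσ'def
  haveI hσ'p : IsProbabilityMeasure σ' := Measure.isProbabilityMeasure_map measurable_swap.aemeasurable
  have hfst : σ'.fst = ν₀.map Tα := by rw [hσ'def, Measure.fst_map_swap]; exact hσ2
  have hsnd : σ'.snd = μ := by rw [hσ'def, Measure.snd_map_swap]; exact hσ1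
  set κ := σ'.condKernel with hκdef
  have hdis : (ν₀.map Tα) ⊗ₘ κ = σ' := by rw [← hfst]; exact σ'.disintegrate κ
  set κ' := κ.comap Tα hTαm with hκ'def
  haveI : IsMarkovKernel κ' := Kernel.IsMarkovKernel.comap κ hTαm
  set m := ν₀ ⊗ₘ κ' with hmdef
  -- marginals of m
  have hmfst : m.map Prod.fst = ν₀ := Measure.fst_compProd ν₀ κ'
  have hmsnd : m.map Prod.snd = μ := by
    rw [← hsnd]
    ext s hs
    have h1 : (m.map Prod.snd) s = ∫⁻ z, κ (Tα z) s ∂ν₀ := by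
      rw [Measure.map_apply measurable_snd hs, hmdef,
        Measure.compProd_apply (measurable_snd hs)]
      refine lintegral_congr fun z => ?_
      rw [hκ'def, Kernel.comap_apply]
      rfl
    have h2 : σ'.snd s = ∫⁻ z, κ (Tα z) s ∂ν₀ := by
      rw [Measure.snd_apply hs, ← hdis, Measure.compProd_apply (measurable_snd hs),
        show (fun a => κ a (Prod.mk a ⁻¹' (Prod.snd ⁻¹' s))) = fun a => κ a s from rfl,
        lintegral_map (Kernel.measurable_coe κ hs) hTαm]
    rw [h1, h2]
  -- cost functions
  set F₁ : Evec d × Evec d → ℝ≥0∞ := fun p => (‖p.2 - p.1‖₊ : ℝ≥0∞) ^ 2 with hF₁def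
  set F₂ : Evec d × Evec d → ℝ≥0∞ := fun p => (‖p.2 - T₀₁ p.1‖₊ : ℝ≥0∞) ^ 2 with hF₂def
  set F₃ : Evec d × Evec d → ℝ≥0∞ := fun p => (‖p.2 - Tα p.1‖₊ : ℝ≥0∞) ^ 2 with hF₃def
  set F₄ : Evec d × Evec d → ℝ≥0∞ := fun p => (‖T₀₁ p.1 - p.1‖₊ : ℝ≥0∞) ^ 2 with hF₄def
  have hGm : Measurable (fun p : Evec d × Evec d => (‖p.1 - p.2‖₊ : ℝ≥0∞) ^ 2) :=
    ((measurable_fst.sub measurable_snd).enorm).pow_const 2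
  have hF₁m : Measurable F₁ := ((measurable_snd.sub measurable_fst).enorm).pow_const 2
  have hF₂m : Measurable F₂ :=
    ((measurable_snd.sub (hT₀₁m.comp measurable_fst)).enorm).pow_const 2
  have hF₃m : Measurable F₃ :=
    ((measurable_snd.sub (hTαm.comp measurable_fst)).enorm).pow_const 2
  have hF₄m : Measurable F₄ :=
    (((hT₀₁m.comp measurable_fst).sub measurable_fst).enorm).pow_const 2
  -- Step A : cost σ = ∫ F₃ dm
  have stepA : ∫⁻ p, (‖p.1 - p.2‖₊ : ℝ≥0∞) ^ 2 ∂σ = ∫⁻ p, F₃ p ∂m := by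
    have e1 : ∫⁻ p, (‖p.1 - p.2‖₊ : ℝ≥0∞) ^ 2 ∂σ
        = ∫⁻ p, (‖p.2 - p.1‖₊ : ℝ≥0∞) ^ 2 ∂σ' := by
      rw [hσ'def, lintegral_map hF₁m measurable_swap]
      exact lintegral_congr fun p => rfl
    rw [e1, ← hdis, Measure.lintegral_compProd hF₁m,
      lintegral_map (Measurable.lintegral_kernel_prod_right' (κ := κ) hF₁m) hTαm,
      hmdef, Measure.lintegral_compProd hF₃m]
    exact lintegral_congr fun z => by rw [hκ'def, Kernel.comap_apply]
  -- Step B : ∫ F₄ dm = W2sq ν₀ ν₁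
  have stepB : ∫⁻ p, F₄ p ∂m = W2sq ν₀ ν₁ := by
    rw [hmdef, Measure.lintegral_compProd hF₄m, ← hopt₀₁]
    refine lintegral_congr fun z => ?_
    have : ∫⁻ x, F₄ (z, x) ∂κ' z = ∫⁻ _, (‖T₀₁ z - z‖₊ : ℝ≥0∞) ^ 2 ∂κ' z := rfl
    rw [this, lintegral_const, measure_univ, mul_one]
  -- Step C : W2sq μ ν₀ ≤ ∫ F₁ dm
  have stepC : W2sq μ ν₀ ≤ ∫⁻ p, F₁ p ∂m := by
    refine sInf_le ⟨m.map Prod.swap, Measure.isProbabilityMeasure_map measurable_swap.aemeasurable,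
      ⟨?_, ?_⟩, ?_⟩
    · rw [Measure.map_map measurable_fst measurable_swap]; exact hmsnd
    · rw [Measure.map_map measurable_snd measurable_swap]; exact hmfst
    · rw [lintegral_map hGm measurable_swap]
      exact lintegral_congr fun p => rfl
  -- Step D : W2sq μ ν₁ ≤ ∫ F₂ dm
  have stepD : W2sq μ ν₁ ≤ ∫⁻ p, F₂ p ∂m := by
    have hgm : Measurable (fun p : Evec d × Evec d => (p.2, T₀₁ p.1)) :=
      measurable_snd.prodMk (hT₀₁m.comp measurable_fst)
    refine sInf_le ⟨m.map (fun p => (p.2, T₀₁ p.1)),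
      Measure.isProbabilityMeasure_map hgm.aemeasurable, ⟨?_, ?_⟩, ?_⟩
    · rw [Measure.map_map measurable_fst hgm]; exact hmsnd
    · rw [Measure.map_map measurable_snd hgm,
        show (Prod.snd ∘ fun p : Evec d × Evec d => (p.2, T₀₁ p.1)) = T₀₁ ∘ Prod.fst from rfl,
        ← Measure.map_map hT₀₁m measurable_fst, hmfst, hT₀₁]
    · rw [lintegral_map hGm hgm]
  -- Step E : key linear identity
  have stepE : ENNReal.ofReal (1-α) * ∫⁻ p, F₁ p ∂m + ENNReal.ofReal α * ∫⁻ p, F₂ p ∂m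
      = ∫⁻ p, F₃ p ∂m + ENNReal.ofReal (α*(1-α)) * ∫⁻ p, F₄ p ∂m := by
    rw [← lintegral_const_mul _ hF₁m, ← lintegral_const_mul _ hF₂m,
      ← lintegral_const_mul _ hF₄m, ← lintegral_add_left (hF₁m.const_mul _),
      ← lintegral_add_left hF₃m]
    refine lintegral_congr fun p => ?_
    obtain ⟨z, x⟩ := p
    have hsq : ∀ w : Evec d, (‖w‖₊ : ℝ≥0∞) ^ 2 = ENNReal.ofReal (‖w‖^2) := fun w => by
      rw [ENNReal.ofReal_pow (norm_nonneg w), ofReal_norm, enorm_eq_nnnorm]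
    simp only [hF₁def, hF₂def, hF₃def, hF₄def, hsq]
    rw [← ENNReal.ofReal_mul hα1', ← ENNReal.ofReal_mul hα0,
      ← ENNReal.ofReal_mul (by positivity), ← ENNReal.ofReal_add (by positivity) (by positivity),
      ← ENNReal.ofReal_add (by positivity) (by positivity)]
    congr 1
    have e1 : (1-α)•(x - z) + α•(x - T₀₁ z) = x - Tα z := by
      simp only [hTαdef]; module
    have e2 : (x - z) - (x - T₀₁ z) = T₀₁ z - z := by abel
    have := real_key α (x - z) (x - T₀₁ z)
    rw [e1, e2] at this
    linarith
  -- combine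
  calc ENNReal.ofReal (1 - α) * W2sq μ ν₀ + ENNReal.ofReal α * W2sq μ ν₁
        - ENNReal.ofReal (α * (1 - α)) * W2sq ν₀ ν₁
      ≤ ENNReal.ofReal (1-α) * ∫⁻ p, F₁ p ∂m + ENNReal.ofReal α * ∫⁻ p, F₂ p ∂m
        - ENNReal.ofReal (α*(1-α)) * ∫⁻ p, F₄ p ∂m := by
        refine tsub_le_tsub (add_le_add (mul_le_mul_right stepC _) (mul_le_mul_right stepD _)) ?_
        rw [stepB]
    _ = ∫⁻ p, F₃ p ∂m + ENNReal.ofReal (α*(1-α)) * ∫⁻ p, F₄ p ∂m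
        - ENNReal.ofReal (α*(1-α)) * ∫⁻ p, F₄ p ∂m := by rw [stepE]
    _ ≤ ∫⁻ p, F₃ p ∂m := tsub_le_iff_right.mpr le_rfl
    _ = ∫⁻ p, (‖p.1 - p.2‖₊ : ℝ≥0∞) ^ 2 ∂σ := stepA.symm
end
end

section
/- Let K ⊆ P₂(ℝᵈ) be such that for any ν₀, ν₁ ∈ K and any random variables X₀ ∼ ν₀, X₁ ∼ ν₁ on a common probability space, the law of (1-α)X₀ + αX₁ belongs to K for all α ∈ [0,1]. Suppose μ ∈ P₂(ℝᵈ) is absolutely continuous with respect to Lebesgue measure and suppose there exist two minimizers μ₁, μ₂ ∈ K of ν ↦ W₂(μ, ν) over K. Then μ₁ = μ₂. -/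
open MeasureTheory ENNReal Filter Topology Set RealInnerProductSpace

noncomputable section

open ProbabilityTheory

theorem par_real {d : ℕ} (x y z : Evec d) :
    ‖x - ((2⁻¹:ℝ) • y + (2⁻¹:ℝ) • z)‖ ^ 2 + ‖(2⁻¹:ℝ) • (y - z)‖ ^ 2
      = 2⁻¹ * ‖x - y‖ ^ 2 + 2⁻¹ * ‖x - z‖ ^ 2 := by
  have hpar := parallelogram_law_with_norm ℝ (x - y) (x - z)
  have h1 : x - ((2⁻¹:ℝ) • y + (2⁻¹:ℝ) • z) = (2⁻¹:ℝ) • ((x - y) + (x - z)) := by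
    module
  have h2 : (2⁻¹:ℝ) • (y - z) = (2⁻¹:ℝ) • ((x - z) - (x - y)) := by module
  rw [h1, h2, norm_smul, norm_smul, norm_sub_rev (x - z)]
  simp only [Real.norm_eq_abs, abs_of_pos (by norm_num : (0:ℝ) < 2⁻¹)]
  nlinarith [hpar]

theorem par_ennreal {d : ℕ} (x y z : Evec d) :
    (‖x - ((2⁻¹:ℝ) • y + (2⁻¹:ℝ) • z)‖₊ : ℝ≥0∞) ^ 2 + (‖(2⁻¹:ℝ) • (y - z)‖₊ : ℝ≥0∞) ^ 2
      = 2⁻¹ * (‖x - y‖₊ : ℝ≥0∞) ^ 2 + 2⁻¹ * (‖x - z‖₊ : ℝ≥0∞) ^ 2 := by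
  have h2 : (2⁻¹ : ℝ≥0∞) = ((2⁻¹ : NNReal) : ℝ≥0∞) := by norm_num
  rw [h2, ← ENNReal.coe_pow, ← ENNReal.coe_pow, ← ENNReal.coe_pow, ← ENNReal.coe_pow,
    ← ENNReal.coe_mul, ← ENNReal.coe_mul, ← ENNReal.coe_add, ← ENNReal.coe_add,
    ENNReal.coe_inj]
  apply NNReal.coe_injective
  push_cast [coe_nnnorm]
  exact par_real x y z


theorem map_eq_of_lintegral {A B : Type*} [MeasurableSpace A] [MeasurableSpace B]
    {ρ₁ : Measure A} {ρ₂ : Measure B} {f : A → B} (hf : Measurable f)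
    (h : ∀ g : B → ℝ≥0∞, Measurable g → ∫⁻ a, g (f a) ∂ρ₁ = ∫⁻ b, g b ∂ρ₂) :
    ρ₁.map f = ρ₂ := by
  ext s hs
  rw [Measure.map_apply hf hs]
  have := h (s.indicator 1) (measurable_one.indicator hs)
  rw [lintegral_indicator hs] at this
  simp only [Pi.one_apply, setLIntegral_one] at this
  rw [← this]
  have heq : ∀ a, s.indicator (1 : B → ℝ≥0∞) (f a) = (f ⁻¹' s).indicator 1 a := by
    intro a; by_cases ha : f a ∈ s <;> simp [Set.indicator_apply, ha]
  simp_rw [heq]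
  rw [lintegral_indicator (hf hs)]
  simp

theorem glue {d : ℕ} (μ : Measure (Evec d)) [IsProbabilityMeasure μ]
    (π₁ π₂ : Measure (Evec d × Evec d)) [IsProbabilityMeasure π₁] [IsProbabilityMeasure π₂]
    (h1 : π₁.map Prod.fst = μ) (h2 : π₂.map Prod.fst = μ) :
    ∃ γ : Measure (Evec d × (Evec d × Evec d)), IsProbabilityMeasure γ ∧
      (∀ g : (Evec d × Evec d) → ℝ≥0∞, Measurable g →
        ∫⁻ p, g (p.1, p.2.1) ∂γ = ∫⁻ q, g q ∂π₁) ∧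
      (∀ g : (Evec d × Evec d) → ℝ≥0∞, Measurable g →
        ∫⁻ p, g (p.1, p.2.2) ∂γ = ∫⁻ q, g q ∂π₂) := by
  have hf1 : π₁.fst = μ := by rw [Measure.fst, h1]
  have hf2 : π₂.fst = μ := by rw [Measure.fst, h2]
  refine ⟨μ ⊗ₘ (π₁.condKernel ×ₖ π₂.condKernel), inferInstance, ?_, ?_⟩
  · intro g hg
    rw [Measure.lintegral_compProd (show Measurable fun p : Evec d × (Evec d × Evec d) => g (p.1, p.2.1) from hg.comp (measurable_fst.prodMk measurable_snd.fst))]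
    have : ∀ x, ∫⁻ q, g (x, q.1) ∂((π₁.condKernel ×ₖ π₂.condKernel) x)
        = ∫⁻ b, g (x, b) ∂(π₁.condKernel x) := by
      intro x
      rw [Kernel.lintegral_prod _ _ _ (show Measurable fun q : Evec d × Evec d => g (x, q.1) from hg.comp (measurable_const.prodMk measurable_fst))]
      simp
    simp_rw [this]
    rw [← Measure.lintegral_compProd hg, ← hf1, π₁.disintegrate π₁.condKernel]
  · intro g hg
    rw [Measure.lintegral_compProd (show Measurable fun p : Evec d × (Evec d × Evec d) => g (p.1, p.2.2) from hg.comp (measurable_fst.prodMk measurable_snd.snd))]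
    have : ∀ x, ∫⁻ q, g (x, q.2) ∂((π₁.condKernel ×ₖ π₂.condKernel) x)
        = ∫⁻ b, g (x, b) ∂(π₂.condKernel x) := by
      intro x
      rw [Kernel.lintegral_prod _ _ _ (show Measurable fun q : Evec d × Evec d => g (x, q.2) from hg.comp (measurable_const.prodMk measurable_snd))]
      simp
    simp_rw [this]
    rw [← Measure.lintegral_compProd hg, ← hf2, π₂.disintegrate π₂.condKernel]

namespace W2aux
variable {d : ℕ}

def costs (μ ν : Measure (Evec d)) : Set ℝ≥0∞ :=
  { c | ∃ π : Measure (Evec d × Evec d), IsProbabilityMeasure π ∧ IsCoupling π μ ν ∧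
    c = ∫⁻ p, (‖p.1 - p.2‖₊ : ℝ≥0∞) ^ 2 ∂π }

theorem sq_bound (a b : Evec d) :
    (‖a - b‖₊ : ℝ≥0∞) ^ 2 ≤ 2 * (‖a‖₊ : ℝ≥0∞) ^ 2 + 2 * (‖b‖₊ : ℝ≥0∞) ^ 2 := by
  have hR : ‖a - b‖ ^ 2 ≤ 2 * ‖a‖ ^ 2 + 2 * ‖b‖ ^ 2 := by
    nlinarith [norm_sub_le a b, norm_nonneg a, norm_nonneg b, sq_nonneg (‖a‖ - ‖b‖),
      norm_nonneg (a - b)]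
  have hN : ‖a - b‖₊ ^ 2 ≤ 2 * ‖a‖₊ ^ 2 + 2 * ‖b‖₊ ^ 2 := by
    rw [← NNReal.coe_le_coe]; push_cast [coe_nnnorm]; exact hR
  calc (‖a - b‖₊ : ℝ≥0∞) ^ 2 = ((‖a - b‖₊ ^ 2 : NNReal) : ℝ≥0∞) := by push_cast; ring
    _ ≤ ((2 * ‖a‖₊ ^ 2 + 2 * ‖b‖₊ ^ 2 : NNReal) : ℝ≥0∞) := by exact_mod_cast hN
    _ = 2 * (‖a‖₊ : ℝ≥0∞) ^ 2 + 2 * (‖b‖₊ : ℝ≥0∞) ^ 2 := by push_cast; ring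

theorem costs_nonempty_bdd (μ ν : Measure (Evec d)) [IsProbabilityMeasure μ]
    [IsProbabilityMeasure ν] (hμ : ∫⁻ x, (‖x‖₊ : ℝ≥0∞) ^ 2 ∂μ < ∞)
    (hν : ∫⁻ x, (‖x‖₊ : ℝ≥0∞) ^ 2 ∂ν < ∞) :
    ∃ c ∈ costs μ ν, c < ∞ := by
  refine ⟨∫⁻ p, (‖p.1 - p.2‖₊ : ℝ≥0∞) ^ 2 ∂(μ.prod ν), ⟨μ.prod ν, inferInstance,
    ⟨?_, ?_⟩, rfl⟩, ?_⟩
  · rw [Measure.map_fst_prod]; simp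
  · rw [Measure.map_snd_prod]; simp
  · have hb : ∫⁻ p : Evec d × Evec d, (‖p.1 - p.2‖₊ : ℝ≥0∞) ^ 2 ∂(μ.prod ν)
        ≤ ∫⁻ p : Evec d × Evec d, (2 * (‖p.1‖₊ : ℝ≥0∞) ^ 2 + 2 * (‖p.2‖₊ : ℝ≥0∞) ^ 2)
          ∂(μ.prod ν) := lintegral_mono fun p => sq_bound p.1 p.2
    refine lt_of_le_of_lt hb ?_
    rw [lintegral_add_left (by fun_prop)]
    have e1 : ∫⁻ p : Evec d × Evec d, 2 * (‖p.1‖₊ : ℝ≥0∞) ^ 2 ∂(μ.prod ν)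
        = 2 * ∫⁻ x, (‖x‖₊ : ℝ≥0∞) ^ 2 ∂μ := by
      rw [lintegral_const_mul _ (by fun_prop)]
      congr 1
      rw [lintegral_prod _ (by fun_prop)]
      simp
    have e2 : ∫⁻ p : Evec d × Evec d, 2 * (‖p.2‖₊ : ℝ≥0∞) ^ 2 ∂(μ.prod ν)
        = 2 * ∫⁻ x, (‖x‖₊ : ℝ≥0∞) ^ 2 ∂ν := by
      rw [lintegral_const_mul _ (by fun_prop)]
      congr 1
      rw [lintegral_prod _ (by fun_prop)]
      simp
    rw [e1, e2]
    exact ENNReal.add_lt_top.mpr ⟨by finiteness, by finiteness⟩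

end W2aux

namespace W2aux

theorem aux_lip {d : ℕ} {δ : ℝ} (F : Set (Evec d)) (x y : Evec d) :
    thickenedIndicatorAux δ F x ≤ thickenedIndicatorAux δ F y + edist x y / ENNReal.ofReal δ := by
  simp only [thickenedIndicatorAux]
  set A := EMetric.infEdist x F / ENNReal.ofReal δ
  set B := EMetric.infEdist y F / ENNReal.ofReal δ
  set C := edist x y / ENNReal.ofReal δ
  have hBA : B ≤ A + C := by
    have h := EMetric.infEdist_le_infEdist_add_edist (x := y) (y := x) (s := F)
    calc B ≤ (EMetric.infEdist x F + edist y x) / ENNReal.ofReal δ :=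
          ENNReal.div_le_div_right h _
      _ = A + edist y x / ENNReal.ofReal δ := ENNReal.add_div
      _ = A + C := by rw [edist_comm]
  rw [tsub_le_iff_right]
  calc (1 : ℝ≥0∞) ≤ (1 - B) + B := le_tsub_add
    _ ≤ (1 - B) + (A + C) := by gcongr
    _ = 1 - B + C + A := by ring

theorem cauchy_schwarz_edist {d : ℕ} (γ : Measure (Evec d × Evec d)) [IsProbabilityMeasure γ] :
    ∫⁻ p, edist p.1 p.2 ∂γ ≤ (∫⁻ p, (‖p.1 - p.2‖₊ : ℝ≥0∞) ^ 2 ∂γ) ^ (1/2 : ℝ) := by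
  have h2 : (2:ℝ).HolderConjugate 2 := Real.HolderConjugate.two_two
  have := ENNReal.lintegral_mul_le_Lp_mul_Lq γ h2
    (f := fun p : Evec d × Evec d => edist p.1 p.2) (g := fun _ => 1)
    measurable_edist.aemeasurable aemeasurable_const
  simp only [mul_one, ENNReal.one_rpow, lintegral_const, measure_univ, one_pow] at this
  calc ∫⁻ p, edist p.1 p.2 ∂γ
      ≤ (∫⁻ p, edist p.1 p.2 ^ (2:ℝ) ∂γ) ^ (1/2 : ℝ) := by
        simpa using this
    _ = (∫⁻ p, (‖p.1 - p.2‖₊ : ℝ≥0∞) ^ 2 ∂γ) ^ (1/2 : ℝ) := by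
        congr 1
        refine lintegral_congr fun p => ?_
        rw [show ((2:ℝ)) = ((2:ℕ):ℝ) by norm_num, ENNReal.rpow_natCast,
          edist_eq_enorm_sub]; rfl

theorem lint_aux_le {d : ℕ} {ν₁ ν₂ : Measure (Evec d)} [IsProbabilityMeasure ν₁]
    [IsProbabilityMeasure ν₂]
    (h : ∀ ε : ℝ≥0∞, ε ≠ 0 → ∃ γ' : Measure (Evec d × Evec d), IsProbabilityMeasure γ' ∧
      γ'.map Prod.fst = ν₁ ∧ γ'.map Prod.snd = ν₂ ∧
      ∫⁻ p, (‖p.1 - p.2‖₊ : ℝ≥0∞) ^ 2 ∂γ' ≤ ε)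
    (F : Set (Evec d)) {δ : ℝ} (hδ : 0 < δ) :
    ∫⁻ x, thickenedIndicatorAux δ F x ∂ν₁ ≤ ∫⁻ x, thickenedIndicatorAux δ F x ∂ν₂ := by
  apply ENNReal.le_of_forall_pos_le_add
  intro ε hε _
  have hδ0 : ENNReal.ofReal δ ≠ 0 := (ENNReal.ofReal_pos.mpr hδ).ne'
  have hδt : ENNReal.ofReal δ ≠ ∞ := ENNReal.ofReal_ne_top
  have hne : ((ENNReal.ofReal δ * ε) ^ 2 : ℝ≥0∞) ≠ 0 := by
    apply pow_ne_zero
    exact mul_ne_zero hδ0 (by exact_mod_cast hε.ne')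
  obtain ⟨γ', hγp, hγ1, hγ2, hγc⟩ := h _ hne
  have hmaux : Measurable (thickenedIndicatorAux δ F) :=
    (continuous_thickenedIndicatorAux hδ F).measurable
  have e1 : ∫⁻ x, thickenedIndicatorAux δ F x ∂ν₁
      = ∫⁻ p, thickenedIndicatorAux δ F p.1 ∂γ' := by
    rw [← hγ1, lintegral_map hmaux measurable_fst]
  have e2 : ∫⁻ x, thickenedIndicatorAux δ F x ∂ν₂
      = ∫⁻ p, thickenedIndicatorAux δ F p.2 ∂γ' := by
    rw [← hγ2, lintegral_map hmaux measurable_snd]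
  rw [e1, e2]
  have hstep : ∫⁻ p, thickenedIndicatorAux δ F p.1 ∂γ'
      ≤ ∫⁻ p, thickenedIndicatorAux δ F p.2 ∂γ'
        + (∫⁻ p, edist p.1 p.2 ∂γ') * (ENNReal.ofReal δ)⁻¹ := by
    calc ∫⁻ p, thickenedIndicatorAux δ F p.1 ∂γ'
        ≤ ∫⁻ p, (thickenedIndicatorAux δ F p.2 + edist p.1 p.2 / ENNReal.ofReal δ) ∂γ' :=
          lintegral_mono fun p => aux_lip F p.1 p.2
      _ = ∫⁻ p, thickenedIndicatorAux δ F p.2 ∂γ'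
          + ∫⁻ p, edist p.1 p.2 * (ENNReal.ofReal δ)⁻¹ ∂γ' := by
          rw [lintegral_add_left (show Measurable fun p : Evec d × Evec d => thickenedIndicatorAux δ F p.2 from hmaux.comp measurable_snd)]
          simp_rw [div_eq_mul_inv]
      _ = _ := by rw [lintegral_mul_const _ (show Measurable fun p : Evec d × Evec d => edist p.1 p.2 from measurable_edist)]
  refine hstep.trans ?_
  gcongr
  have hCS := (cauchy_schwarz_edist γ').trans (ENNReal.rpow_le_rpow hγc (by norm_num))
  have hpow : (((ENNReal.ofReal δ * ε) ^ 2 : ℝ≥0∞)) ^ (1/2 : ℝ) = ENNReal.ofReal δ * ε := by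
    rw [← ENNReal.rpow_natCast _ 2, ← ENNReal.rpow_mul]
    norm_num
  rw [hpow] at hCS
  calc (∫⁻ p, edist p.1 p.2 ∂γ') * (ENNReal.ofReal δ)⁻¹
      ≤ (ENNReal.ofReal δ * ε) * (ENNReal.ofReal δ)⁻¹ := by gcongr
    _ = ε := by
        rw [mul_comm (ENNReal.ofReal δ) (ε:ℝ≥0∞), mul_assoc,
          ENNReal.mul_inv_cancel hδ0 hδt, mul_one]

end W2aux

namespace W2aux

theorem eq_of_couplings {d : ℕ} {μ₁ μ₂ : Measure (Evec d)} [IsProbabilityMeasure μ₁]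
    [IsProbabilityMeasure μ₂]
    (h12 : ∀ ε : ℝ≥0∞, ε ≠ 0 → ∃ γ' : Measure (Evec d × Evec d), IsProbabilityMeasure γ' ∧
      γ'.map Prod.fst = μ₁ ∧ γ'.map Prod.snd = μ₂ ∧
      ∫⁻ p, (‖p.1 - p.2‖₊ : ℝ≥0∞) ^ 2 ∂γ' ≤ ε)
    (h21 : ∀ ε : ℝ≥0∞, ε ≠ 0 → ∃ γ' : Measure (Evec d × Evec d), IsProbabilityMeasure γ' ∧
      γ'.map Prod.fst = μ₂ ∧ γ'.map Prod.snd = μ₁ ∧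
      ∫⁻ p, (‖p.1 - p.2‖₊ : ℝ≥0∞) ^ 2 ∂γ' ≤ ε) :
    μ₁ = μ₂ := by
  have haux : ∀ (F : Set (Evec d)) {δ : ℝ}, 0 < δ →
      ∫⁻ x, thickenedIndicatorAux δ F x ∂μ₁ = ∫⁻ x, thickenedIndicatorAux δ F x ∂μ₂ :=
    fun F _ hδ => le_antisymm (lint_aux_le h12 F hδ) (lint_aux_le h21 F hδ)
  have hF : ∀ F : Set (Evec d), IsClosed F → μ₁ F = μ₂ F := by
    intro F hFc
    have hδs : ∀ n : ℕ, 0 < (1 : ℝ) / (n + 1) := fun n => by positivity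
    have h1 := tendsto_lintegral_thickenedIndicator_of_isClosed μ₁ hFc hδs
      tendsto_one_div_add_atTop_nhds_zero_nat
    have h2 := tendsto_lintegral_thickenedIndicator_of_isClosed μ₂ hFc hδs
      tendsto_one_div_add_atTop_nhds_zero_nat
    have hcoe : ∀ (ν : Measure (Evec d)) (n : ℕ),
        (∫⁻ ω, (thickenedIndicator (hδs n) F ω : ℝ≥0∞) ∂ν)
          = ∫⁻ ω, thickenedIndicatorAux (1 / (n + 1)) F ω ∂ν := by
      intro ν n
      refine lintegral_congr fun ω => ?_
      rw [thickenedIndicator_apply, ENNReal.coe_toNNReal thickenedIndicatorAux_lt_top.ne]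
    have h1' := h1
    rw [show (fun n => ∫⁻ ω, (thickenedIndicator (hδs n) F ω : ℝ≥0∞) ∂μ₁)
        = fun n => ∫⁻ ω, (thickenedIndicator (hδs n) F ω : ℝ≥0∞) ∂μ₂ from
      funext fun n => by rw [hcoe μ₁ n, hcoe μ₂ n, haux F (hδs n)]] at h1'
    exact tendsto_nhds_unique h1' h2
  apply MeasureTheory.ext_of_generate_finite {s : Set (Evec d) | IsClosed s}
    ?_ isPiSystem_isClosed (fun s hs => hF s hs) (by simp)
  rw [BorelSpace.measurable_eq (α := Evec d), borel_eq_generateFrom_isClosed]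

theorem half_sq {d : ℕ} (v : Evec d) :
    (‖v‖₊ : ℝ≥0∞) ^ 2 = 4 * (‖(2⁻¹:ℝ) • v‖₊ : ℝ≥0∞) ^ 2 := by
  have hN : ‖v‖₊ ^ 2 = 4 * ‖(2⁻¹:ℝ) • v‖₊ ^ 2 := by
    rw [← NNReal.coe_inj]
    push_cast [coe_nnnorm, norm_smul]
    simp only [Real.norm_eq_abs]
    rw [abs_of_pos (by norm_num : (0:ℝ) < 2⁻¹)]
    ring
  calc (‖v‖₊ : ℝ≥0∞) ^ 2 = ((‖v‖₊ ^ 2 : NNReal) : ℝ≥0∞) := by push_cast; ring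
    _ = ((4 * ‖(2⁻¹:ℝ) • v‖₊ ^ 2 : NNReal) : ℝ≥0∞) := by rw [hN]
    _ = 4 * (‖(2⁻¹:ℝ) • v‖₊ : ℝ≥0∞) ^ 2 := by push_cast; ring

theorem sq_le_of_sqrt_le {a b : ℝ≥0∞} (h : a ^ (1/2:ℝ) ≤ b ^ (1/2:ℝ)) : a ≤ b := by
  calc a = (a ^ (1/2:ℝ)) ^ (2:ℝ) := by rw [← ENNReal.rpow_mul]; norm_num
    _ ≤ (b ^ (1/2:ℝ)) ^ (2:ℝ) := ENNReal.rpow_le_rpow h (by norm_num)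
    _ = b := by rw [← ENNReal.rpow_mul]; norm_num

end W2aux

theorem main_key {d : ℕ} {K : Set (Measure (Evec d))}
    (hKconv : ∀ ν₀ ∈ K, ∀ ν₁ ∈ K, ∀ π : Measure (Evec d × Evec d),
      IsProbabilityMeasure π → π.map Prod.fst = ν₀ → π.map Prod.snd = ν₁ →
      ∀ α ∈ Set.Icc (0:ℝ) 1, π.map (fun p => (1 - α) • p.1 + α • p.2) ∈ K)
    (μ : Measure (Evec d)) [IsProbabilityMeasure μ]
    {μ₁ μ₂ : Measure (Evec d)} [IsProbabilityMeasure μ₁] [IsProbabilityMeasure μ₂]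
    (hμ₁ : μ₁ ∈ K) (hμ₂ : μ₂ ∈ K)
    (hmin : ∀ ν ∈ K, sInf (W2aux.costs μ μ₁) ≤ sInf (W2aux.costs μ ν))
    (hm2 : sInf (W2aux.costs μ μ₂) = sInf (W2aux.costs μ μ₁))
    (hm_lt : sInf (W2aux.costs μ μ₁) < ∞) :
    ∀ ε : ℝ≥0∞, ε ≠ 0 → ∃ γ' : Measure (Evec d × Evec d), IsProbabilityMeasure γ' ∧
      γ'.map Prod.fst = μ₁ ∧ γ'.map Prod.snd = μ₂ ∧
      ∫⁻ p, (‖p.1 - p.2‖₊ : ℝ≥0∞) ^ 2 ∂γ' ≤ ε := by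
  intro ε hε
  set m := sInf (W2aux.costs μ μ₁) with hm
  have hε' : ε / 4 ≠ 0 := by simp [ENNReal.div_eq_zero_iff, hε]
  have hlt1 : sInf (W2aux.costs μ μ₁) < m + ε / 4 := ENNReal.lt_add_right hm_lt.ne hε'
  have hlt2 : sInf (W2aux.costs μ μ₂) < m + ε / 4 := by rw [hm2]; exact hlt1
  obtain ⟨c1, ⟨π₁, hπ₁p, hπ₁c, rfl⟩, hc1⟩ := sInf_lt_iff.mp hlt1
  obtain ⟨c2, ⟨π₂, hπ₂p, hπ₂c, rfl⟩, hc2⟩ := sInf_lt_iff.mp hlt2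
  obtain ⟨hπ₁f, hπ₁s⟩ := hπ₁c
  obtain ⟨hπ₂f, hπ₂s⟩ := hπ₂c
  haveI := hπ₁p; haveI := hπ₂p
  obtain ⟨γ, hγp, hg₁, hg₂⟩ := glue μ π₁ π₂ hπ₁f hπ₂f
  haveI := hγp
  have hmsq : Measurable fun q : Evec d × Evec d => (‖q.1 - q.2‖₊ : ℝ≥0∞) ^ 2 :=
    ((measurable_fst.sub measurable_snd).nnnorm.coe_nnreal_ennreal).pow_const 2
  -- the three projections
  have hf12 : Measurable fun p : Evec d × (Evec d × Evec d) => (p.2.1, p.2.2) :=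
    measurable_snd.fst.prodMk measurable_snd.snd
  set γ12 : Measure (Evec d × Evec d) := γ.map (fun p => (p.2.1, p.2.2)) with hγ12
  haveI : IsProbabilityMeasure γ12 := Measure.isProbabilityMeasure_map hf12.aemeasurable
  have hγ12fst : γ12.map Prod.fst = μ₁ := by
    rw [hγ12, Measure.map_map measurable_fst hf12]
    apply map_eq_of_lintegral (measurable_fst.comp hf12)
    intro g hg
    have h := hg₁ (fun q => g q.2) (hg.comp measurable_snd)
    rw [← hπ₁s, lintegral_map hg measurable_snd]
    exact h
  have hγ12snd : γ12.map Prod.snd = μ₂ := by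
    rw [hγ12, Measure.map_map measurable_snd hf12]
    apply map_eq_of_lintegral (measurable_snd.comp hf12)
    intro g hg
    have h := hg₂ (fun q => g q.2) (hg.comp measurable_snd)
    rw [← hπ₂s, lintegral_map hg measurable_snd]
    exact h
  -- midpoint map
  have hmid : Measurable fun p : Evec d × (Evec d × Evec d) =>
      (2⁻¹:ℝ) • p.2.1 + (2⁻¹:ℝ) • p.2.2 :=
    by fun_prop
  have hfm : Measurable fun p : Evec d × (Evec d × Evec d) =>
      (p.1, (2⁻¹:ℝ) • p.2.1 + (2⁻¹:ℝ) • p.2.2) := measurable_fst.prodMk hmid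
  set γm : Measure (Evec d × Evec d) :=
    γ.map (fun p => (p.1, (2⁻¹:ℝ) • p.2.1 + (2⁻¹:ℝ) • p.2.2)) with hγm
  haveI : IsProbabilityMeasure γm := Measure.isProbabilityMeasure_map hfm.aemeasurable
  set ν : Measure (Evec d) := γm.map Prod.snd with hν
  haveI : IsProbabilityMeasure ν := Measure.isProbabilityMeasure_map measurable_snd.aemeasurable
  have hγmfst : γm.map Prod.fst = μ := by
    rw [hγm, Measure.map_map measurable_fst hfm]
    apply map_eq_of_lintegral (measurable_fst.comp hfm)
    intro g hg
    have h := hg₁ (fun q => g q.1) (hg.comp measurable_fst)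
    rw [← hπ₁f, lintegral_map hg measurable_fst]
    exact h
  -- ν ∈ K
  have hνK : ν ∈ K := by
    have hmem := hKconv μ₁ hμ₁ μ₂ hμ₂ γ12 inferInstance hγ12fst hγ12snd (2⁻¹:ℝ)
      ⟨by norm_num, by norm_num⟩
    have : γ12.map (fun p : Evec d × Evec d => (1 - (2⁻¹:ℝ)) • p.1 + (2⁻¹:ℝ) • p.2) = ν := by
      have hgm : Measurable fun p : Evec d × Evec d =>
          (1 - (2⁻¹:ℝ)) • p.1 + (2⁻¹:ℝ) • p.2 := by fun_prop
      rw [hγ12, hν, hγm, Measure.map_map measurable_snd hfm, Measure.map_map hgm hf12]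
      congr 1
      funext p
      show (1 - (2⁻¹:ℝ)) • p.2.1 + (2⁻¹:ℝ) • p.2.2
        = (2⁻¹:ℝ) • p.2.1 + (2⁻¹:ℝ) • p.2.2
      norm_num
    rwa [this] at hmem
  -- cost quantities over γ
  set C1 := ∫⁻ p : Evec d × (Evec d × Evec d), (‖p.1 - p.2.1‖₊ : ℝ≥0∞) ^ 2 ∂γ with hC1
  set C2 := ∫⁻ p : Evec d × (Evec d × Evec d), (‖p.1 - p.2.2‖₊ : ℝ≥0∞) ^ 2 ∂γ with hC2
  set Cm := ∫⁻ p : Evec d × (Evec d × Evec d),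
    (‖p.1 - ((2⁻¹:ℝ) • p.2.1 + (2⁻¹:ℝ) • p.2.2)‖₊ : ℝ≥0∞) ^ 2 ∂γ with hCm
  set D := ∫⁻ p : Evec d × (Evec d × Evec d),
    (‖(2⁻¹:ℝ) • (p.2.1 - p.2.2)‖₊ : ℝ≥0∞) ^ 2 ∂γ with hD
  have hC1eq : C1 = ∫⁻ q, (‖q.1 - q.2‖₊ : ℝ≥0∞) ^ 2 ∂π₁ := hg₁ _ hmsq
  have hC2eq : C2 = ∫⁻ q, (‖q.1 - q.2‖₊ : ℝ≥0∞) ^ 2 ∂π₂ := hg₂ _ hmsq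
  have hC1le : C1 ≤ m + ε / 4 := by rw [hC1eq]; exact hc1.le
  have hC2le : C2 ≤ m + ε / 4 := by rw [hC2eq]; exact hc2.le
  -- measurability of integrands
  have hmA : Measurable fun p : Evec d × (Evec d × Evec d) =>
      (‖p.1 - ((2⁻¹:ℝ) • p.2.1 + (2⁻¹:ℝ) • p.2.2)‖₊ : ℝ≥0∞) ^ 2 :=
    ((measurable_fst.sub hmid).nnnorm.coe_nnreal_ennreal).pow_const 2
  have hmB : Measurable fun p : Evec d × (Evec d × Evec d) =>
      (‖(2⁻¹:ℝ) • (p.2.1 - p.2.2)‖₊ : ℝ≥0∞) ^ 2 :=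
    by fun_prop
  have hm1 : Measurable fun p : Evec d × (Evec d × Evec d) =>
      (‖p.1 - p.2.1‖₊ : ℝ≥0∞) ^ 2 :=
    ((measurable_fst.sub measurable_snd.fst).nnnorm.coe_nnreal_ennreal).pow_const 2
  have hm2' : Measurable fun p : Evec d × (Evec d × Evec d) =>
      (‖p.1 - p.2.2‖₊ : ℝ≥0∞) ^ 2 :=
    ((measurable_fst.sub measurable_snd.snd).nnnorm.coe_nnreal_ennreal).pow_const 2
  -- parallelogram identity integrated
  have hIdent : Cm + D = 2⁻¹ * C1 + 2⁻¹ * C2 := by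
    rw [hCm, hD, hC1, hC2, ← lintegral_add_left hmA, ← lintegral_const_mul _ hm1,
      ← lintegral_const_mul _ hm2', ← lintegral_add_left (hm1.const_mul _)]
    exact lintegral_congr fun p => par_ennreal p.1 p.2.1 p.2.2
  -- m ≤ Cm
  have hmCm : m ≤ Cm := by
    have h1 : m ≤ sInf (W2aux.costs μ ν) := hmin ν hνK
    have h2 : sInf (W2aux.costs μ ν) ≤ Cm := by
      apply sInf_le
      refine ⟨γm, inferInstance, ⟨hγmfst, rfl⟩, ?_⟩
      rw [hCm, hγm, lintegral_map hmsq hfm]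
    exact h1.trans h2
  -- D ≤ ε/4
  have hDle : D ≤ ε / 4 := by
    have hchain : m + D ≤ m + ε / 4 := by
      calc m + D ≤ Cm + D := by gcongr
        _ = 2⁻¹ * C1 + 2⁻¹ * C2 := hIdent
        _ ≤ 2⁻¹ * (m + ε / 4) + 2⁻¹ * (m + ε / 4) := by gcongr
        _ = m + ε / 4 := by rw [← add_mul, ENNReal.inv_two_add_inv_two, one_mul]
    exact (ENNReal.add_le_add_iff_left hm_lt.ne).mp hchain
  refine ⟨γ12, inferInstance, hγ12fst, hγ12snd, ?_⟩
  have hcost12 : ∫⁻ q, (‖q.1 - q.2‖₊ : ℝ≥0∞) ^ 2 ∂γ12 = 4 * D := by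
    rw [hγ12, lintegral_map hmsq hf12, hD, ← lintegral_const_mul _ hmB]
    exact lintegral_congr fun p => W2aux.half_sq (p.2.1 - p.2.2)
  rw [hcost12]
  calc 4 * D ≤ 4 * (ε / 4) := by gcongr
    _ ≤ ε := ENNReal.mul_div_le


theorem W2_proj_unique {d : ℕ} (K : Set (Measure (Evec d)))
    (hKconv : ∀ ν₀ ∈ K, ∀ ν₁ ∈ K, ∀ π : Measure (Evec d × Evec d),
      IsProbabilityMeasure π → π.map Prod.fst = ν₀ → π.map Prod.snd = ν₁ →
      ∀ α ∈ Icc (0:ℝ) 1, π.map (fun p => (1 - α) • p.1 + α • p.2) ∈ K)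
    (hKprob : ∀ ν ∈ K, IsProbabilityMeasure ν)
    (hK2 : ∀ ν ∈ K, FiniteSecondMoment ν)
    (μ : Measure (Evec d)) [IsProbabilityMeasure μ]
    (hμ2 : FiniteSecondMoment μ) (hμac : μ ≪ MeasureTheory.volume)
    (μ₁ μ₂ : Measure (Evec d)) (hμ₁ : μ₁ ∈ K) (hμ₂ : μ₂ ∈ K)
    (hmin₁ : ∀ ν ∈ K, W2 μ μ₁ ≤ W2 μ ν)
    (hmin₂ : ∀ ν ∈ K, W2 μ μ₂ ≤ W2 μ ν) :
    μ₁ = μ₂ := by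
  haveI h₁p := hKprob μ₁ hμ₁
  haveI h₂p := hKprob μ₂ hμ₂
  have hcosts : ∀ ν : Measure (Evec d), W2sq μ ν = sInf (W2aux.costs μ ν) := fun _ => rfl
  have hsq : ∀ {ν₁ ν₂ : Measure (Evec d)}, W2 μ ν₁ ≤ W2 μ ν₂ → W2sq μ ν₁ ≤ W2sq μ ν₂ :=
    fun h => W2aux.sq_le_of_sqrt_le h
  have hm2 : sInf (W2aux.costs μ μ₂) = sInf (W2aux.costs μ μ₁) := by
    rw [← hcosts, ← hcosts]
    exact le_antisymm (hsq (hmin₂ μ₁ hμ₁)) (hsq (hmin₁ μ₂ hμ₂))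
  have hm_lt : sInf (W2aux.costs μ μ₁) < ∞ := by
    obtain ⟨c, hc, hcf⟩ := W2aux.costs_nonempty_bdd μ μ₁ hμ2 (hK2 μ₁ hμ₁)
    exact lt_of_le_of_lt (sInf_le hc) hcf
  have hmin1' : ∀ ν ∈ K, sInf (W2aux.costs μ μ₁) ≤ sInf (W2aux.costs μ ν) := by
    intro ν hν; rw [← hcosts, ← hcosts]; exact hsq (hmin₁ ν hν)
  have hmin2' : ∀ ν ∈ K, sInf (W2aux.costs μ μ₂) ≤ sInf (W2aux.costs μ ν) := by
    intro ν hν; rw [← hcosts, ← hcosts]; exact hsq (hmin₂ ν hν)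
  have k12 := main_key hKconv μ hμ₁ hμ₂ hmin1' hm2 hm_lt
  have k21 := main_key hKconv μ hμ₂ hμ₁ hmin2' hm2.symm (by rw [hm2]; exact hm_lt)
  exact W2aux.eq_of_couplings k12 k21
end
end

section
/- Let (Ω, F, P) be a probability space, C ⊆ H := L²(Ω; ℝᵈ) a closed convex set, and suppose there exist Y ∈ H and r > 0 such that Y + rZ ∈ C for every Z ∈ H with ‖Z‖_{L^∞} ≤ 1 (an interior-point condition). Then for every X ∈ H, r·E[|P_C(X) - X|] ≤ ⟨Y - X, P_C(X) - X⟩ ≤ ‖Y - X‖·‖P_C(X) - X‖, where P_C is the metric projection onto C and E[|·|] denotes the expectation of the pointwise Euclidean norm. -/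
open MeasureTheory Set RealInnerProductSpace

section Aux

variable {Ω : Type*} [MeasurableSpace Ω] {E : Type*} [NormedAddCommGroup E]
  [InnerProductSpace ℝ E] {P : Measure Ω}

lemma integrable_inner_of_memL2 {f g : Ω → E} (hf : MemLp f 2 P) (hg : MemLp g 2 P) :
    Integrable (fun ω => ⟪f ω, g ω⟫) P := by
  have h := L2.integrable_inner (𝕜 := ℝ) (hf.toLp f) (hg.toLp g)
  refine h.congr ?_
  filter_upwards [hf.coeFn_toLp, hg.coeFn_toLp] with ω h1 h2
  rw [h1, h2]

lemma integrable_norm_sq_of_memL2 {f : Ω → E} (hf : MemLp f 2 P) :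
    Integrable (fun ω => ‖f ω‖ ^ 2) P := by
  have h := integrable_inner_of_memL2 hf hf
  simpa [real_inner_self_eq_norm_sq] using h

lemma integral_inner_eq_toLp {f g : Ω → E} (hf : MemLp f 2 P) (hg : MemLp g 2 P) :
    ⟪hf.toLp f, hg.toLp g⟫ = ∫ ω, ⟪f ω, g ω⟫ ∂P := by
  rw [L2.inner_def]
  refine integral_congr_ae ?_
  filter_upwards [hf.coeFn_toLp, hg.coeFn_toLp] with ω h1 h2
  rw [h1, h2]

lemma integral_cauchy_schwarz {f g : Ω → E} (hf : MemLp f 2 P) (hg : MemLp g 2 P) :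
    ∫ ω, ⟪f ω, g ω⟫ ∂P ≤ Real.sqrt (∫ ω, ‖f ω‖ ^ 2 ∂P) * Real.sqrt (∫ ω, ‖g ω‖ ^ 2 ∂P) := by
  have hF : ‖hf.toLp f‖ = Real.sqrt (∫ ω, ‖f ω‖ ^ 2 ∂P) := by
    rw [norm_eq_sqrt_real_inner, integral_inner_eq_toLp hf hf]
    simp [real_inner_self_eq_norm_sq]
  have hG : ‖hg.toLp g‖ = Real.sqrt (∫ ω, ‖g ω‖ ^ 2 ∂P) := by
    rw [norm_eq_sqrt_real_inner, integral_inner_eq_toLp hg hg]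
    simp [real_inner_self_eq_norm_sq]
  calc ∫ ω, ⟪f ω, g ω⟫ ∂P = ⟪hf.toLp f, hg.toLp g⟫ := (integral_inner_eq_toLp hf hg).symm
    _ ≤ ‖hf.toLp f‖ * ‖hg.toLp g‖ := real_inner_le_norm _ _
    _ = _ := by rw [hF, hG]

lemma variational_ineq
    (C : Set (Ω → E)) (hCconv : Convex ℝ C)
    (X PX : Ω → E) (hX2 : MemLp X 2 P) (hPX2 : MemLp PX 2 P) (hPXmem : PX ∈ C)
    (hPXmin : ∀ W ∈ C, MemLp W 2 P →
      ∫ ω, ‖X ω - PX ω‖ ^ 2 ∂P ≤ ∫ ω, ‖X ω - W ω‖ ^ 2 ∂P)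
    (W : Ω → E) (hW : W ∈ C) (hW2 : MemLp W 2 P) :
    ∫ ω, ⟪X ω - PX ω, W ω - PX ω⟫ ∂P ≤ 0 := by
  set a : Ω → E := fun ω => X ω - PX ω with ha
  set b : Ω → E := fun ω => W ω - PX ω with hb
  have ha2 : MemLp a 2 P := hX2.sub hPX2
  have hb2 : MemLp b 2 P := hW2.sub hPX2
  have Ia : Integrable (fun ω => ‖a ω‖ ^ 2) P := integrable_norm_sq_of_memL2 ha2
  have Iab : Integrable (fun ω => ⟪a ω, b ω⟫) P := integrable_inner_of_memL2 ha2 hb2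
  have Ib : Integrable (fun ω => ‖b ω‖ ^ 2) P := integrable_norm_sq_of_memL2 hb2
  set I := ∫ ω, ⟪a ω, b ω⟫ ∂P with hI
  set J := ∫ ω, ‖b ω‖ ^ 2 ∂P with hJ
  have hJ0 : 0 ≤ J := integral_nonneg fun ω => sq_nonneg _
  have key : ∀ t : ℝ, 0 < t → t ≤ 1 → I ≤ t * J / 2 := by
    intro t ht0 ht1
    set Wt : Ω → E := fun ω => PX ω + t • (W ω - PX ω) with hWt
    have hmem : Wt ∈ C := by
      have h := hCconv hPXmem hW (by linarith : (0:ℝ) ≤ 1 - t) ht0.le (by ring)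
      convert h using 1
      funext ω
      show PX ω + t • (W ω - PX ω) = (1 - t) • PX ω + t • W ω
      rw [smul_sub, sub_smul, one_smul]; abel
    have hWt2 : MemLp Wt 2 P := hPX2.add ((hW2.sub hPX2).const_smul t)
    have hmin := hPXmin Wt hmem hWt2
    have hpt : ∀ ω, ‖X ω - Wt ω‖ ^ 2
        = ‖a ω‖ ^ 2 - (2 * t) * ⟪a ω, b ω⟫ + t ^ 2 * ‖b ω‖ ^ 2 := by
      intro ω
      have : X ω - Wt ω = a ω - t • b ω := by
        simp only [hWt, ha, hb]; abel
      rw [this, norm_sub_sq_real, real_inner_smul_right, norm_smul]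
      simp [mul_pow, abs_of_pos ht0]
      ring
    have hint2 : ∫ ω, ‖X ω - Wt ω‖ ^ 2 ∂P
        = (∫ ω, ‖a ω‖ ^ 2 ∂P) - (2 * t) * I + t ^ 2 * J := by
      have hf1 : Integrable (fun ω => ‖a ω‖ ^ 2 - (2 * t) * ⟪a ω, b ω⟫) P := by
        exact Ia.sub (Iab.const_mul (2 * t))
      have e1 : ∫ ω, (‖a ω‖ ^ 2 - (2 * t) * ⟪a ω, b ω⟫ + t ^ 2 * ‖b ω‖ ^ 2) ∂P
          = (∫ ω, (‖a ω‖ ^ 2 - (2 * t) * ⟪a ω, b ω⟫) ∂P) + ∫ ω, t ^ 2 * ‖b ω‖ ^ 2 ∂P :=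
        integral_add hf1 (Ib.const_mul _)
      have e2 : ∫ ω, (‖a ω‖ ^ 2 - (2 * t) * ⟪a ω, b ω⟫) ∂P
          = (∫ ω, ‖a ω‖ ^ 2 ∂P) - ∫ ω, (2 * t) * ⟪a ω, b ω⟫ ∂P :=
        integral_sub Ia (Iab.const_mul _)
      calc ∫ ω, ‖X ω - Wt ω‖ ^ 2 ∂P
          = ∫ ω, (‖a ω‖ ^ 2 - (2 * t) * ⟪a ω, b ω⟫ + t ^ 2 * ‖b ω‖ ^ 2) ∂P :=
            integral_congr_ae (Filter.Eventually.of_forall hpt)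
        _ = (∫ ω, ‖a ω‖ ^ 2 ∂P) - (2 * t) * I + t ^ 2 * J := by
            rw [e1, e2, integral_const_mul, integral_const_mul]
    rw [hint2] at hmin
    nlinarith
  by_contra hcon
  push_neg at hcon
  rcases eq_or_lt_of_le hJ0 with hJe | hJp
  · have := key 1 one_pos le_rfl
    rw [← hJe] at this
    linarith
  · have ht0 : 0 < min 1 (I / J) := lt_min one_pos (div_pos hcon hJp)
    have h := key _ ht0 (min_le_left _ _)
    have h2 : min 1 (I / J) ≤ I / J := min_le_right _ _
    have : min 1 (I / J) * J ≤ I := by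
      calc min 1 (I / J) * J ≤ (I / J) * J := by nlinarith
        _ = I := by field_simp
    nlinarith

lemma inner_inv_norm_smul (v : E) : ⟪v, ‖v‖⁻¹ • v⟫ = ‖v‖ := by
  rcases eq_or_ne v 0 with rfl | hv
  · simp
  · rw [real_inner_smul_right, real_inner_self_eq_norm_sq, sq]
    rw [inv_mul_eq_div, mul_div_assoc, div_self (norm_ne_zero_iff.mpr hv), mul_one]

end Aux

theorem interior_point_penalization_control {d : ℕ} {Ω : Type*} [MeasurableSpace Ω]
    (P : Measure Ω) [IsProbabilityMeasure P]
    (C : Set (Ω → EuclideanSpace ℝ (Fin d)))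
    (hCconv : Convex ℝ C)
    (hCclosed : ∀ (f : ℕ → Ω → EuclideanSpace ℝ (Fin d)) (g : Ω → EuclideanSpace ℝ (Fin d)),
      (∀ n, f n ∈ C) →
      Filter.Tendsto (fun n => ∫ ω, ‖f n ω - g ω‖ ^ 2 ∂P) Filter.atTop (nhds 0) → g ∈ C)
    (Y : Ω → EuclideanSpace ℝ (Fin d)) (hYm : Measurable Y) (hY2 : MemLp Y 2 P)
    (r : ℝ) (hr : 0 < r)
    (hint : ∀ Z : Ω → EuclideanSpace ℝ (Fin d), Measurable Z → (∀ᵐ ω ∂P, ‖Z ω‖ ≤ 1) →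
      (fun ω => Y ω + r • Z ω) ∈ C)
    (X PX : Ω → EuclideanSpace ℝ (Fin d)) (hXm : Measurable X) (hX2 : MemLp X 2 P)
    (hPXm : Measurable PX) (hPX2 : MemLp PX 2 P)
    (hPXmem : PX ∈ C)
    (hPXmin : ∀ W ∈ C, MemLp W 2 P →
      ∫ ω, ‖X ω - PX ω‖ ^ 2 ∂P ≤ ∫ ω, ‖X ω - W ω‖ ^ 2 ∂P) :
    r * ∫ ω, ‖PX ω - X ω‖ ∂P ≤ ∫ ω, ⟪Y ω - X ω, PX ω - X ω⟫ ∂P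
    ∧ ∫ ω, ⟪Y ω - X ω, PX ω - X ω⟫ ∂P
        ≤ Real.sqrt (∫ ω, ‖Y ω - X ω‖ ^ 2 ∂P) * Real.sqrt (∫ ω, ‖PX ω - X ω‖ ^ 2 ∂P) := by
  have ha2 : MemLp (fun ω => X ω - PX ω) 2 P := hX2.sub hPX2
  have hyx2 : MemLp (fun ω => Y ω - X ω) 2 P := hY2.sub hX2
  constructor
  · -- penalization control
    set Z : Ω → EuclideanSpace ℝ (Fin d) :=
      fun ω => ‖X ω - PX ω‖⁻¹ • (X ω - PX ω) with hZ
    have hZm : Measurable Z := ((hXm.sub hPXm).norm.inv).smul (hXm.sub hPXm)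
    have hZb : ∀ ω, ‖Z ω‖ ≤ 1 := by
      intro ω
      rcases eq_or_ne (X ω - PX ω) 0 with h0 | h0
      · simp [hZ, h0]
      · simp only [hZ, norm_smul, norm_inv, norm_norm]
        rw [inv_mul_cancel₀ (norm_ne_zero_iff.mpr h0)]
    have hZ2 : MemLp Z 2 P :=
      (memLp_top_of_bound hZm.aestronglyMeasurable 1 (ae_of_all _ hZb)).mono_exponent
        le_top
    have hWC := hint Z hZm (ae_of_all _ hZb)
    have hW2 : MemLp (fun ω => Y ω + r • Z ω) 2 P := hY2.add (hZ2.const_smul r)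
    have hvar := variational_ineq C hCconv X PX hX2 hPX2 hPXmem hPXmin _ hWC hW2
    have hpt : ∀ ω, ⟪X ω - PX ω, (fun ω => Y ω + r • Z ω) ω - PX ω⟫
        = ⟪X ω - PX ω, Y ω - X ω⟫ + ‖X ω - PX ω‖ ^ 2 + r * ‖X ω - PX ω‖ := by
      intro ω
      have hdec : (fun ω => Y ω + r • Z ω) ω - PX ω
          = (Y ω - X ω) + (X ω - PX ω) + r • Z ω := by simp only; abel
      rw [hdec, inner_add_right, inner_add_right, real_inner_self_eq_norm_sq,
        real_inner_smul_right, inner_inv_norm_smul]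
    have K1 : Integrable (fun ω => ⟪X ω - PX ω, Y ω - X ω⟫) P :=
      integrable_inner_of_memL2 ha2 hyx2
    have K2 : Integrable (fun ω => ‖X ω - PX ω‖ ^ 2) P := integrable_norm_sq_of_memL2 ha2
    have K3 : Integrable (fun ω => ‖X ω - PX ω‖) P :=
      (memLp_one_iff_integrable.mp (ha2.mono_exponent one_le_two)).norm
    have hsplit : ∫ ω, ⟪X ω - PX ω, (fun ω => Y ω + r • Z ω) ω - PX ω⟫ ∂P
        = (∫ ω, ⟪X ω - PX ω, Y ω - X ω⟫ ∂P) + (∫ ω, ‖X ω - PX ω‖ ^ 2 ∂P)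
          + r * ∫ ω, ‖X ω - PX ω‖ ∂P := by
      have hadd : Integrable (fun ω => ⟪X ω - PX ω, Y ω - X ω⟫ + ‖X ω - PX ω‖ ^ 2) P := by
        exact K1.add K2
      have e1 : ∫ ω, (⟪X ω - PX ω, Y ω - X ω⟫ + ‖X ω - PX ω‖ ^ 2
            + r * ‖X ω - PX ω‖) ∂P
          = (∫ ω, (⟪X ω - PX ω, Y ω - X ω⟫ + ‖X ω - PX ω‖ ^ 2) ∂P)
            + ∫ ω, r * ‖X ω - PX ω‖ ∂P :=
        integral_add hadd (K3.const_mul r)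
      have e2 : ∫ ω, (⟪X ω - PX ω, Y ω - X ω⟫ + ‖X ω - PX ω‖ ^ 2) ∂P
          = (∫ ω, ⟪X ω - PX ω, Y ω - X ω⟫ ∂P) + ∫ ω, ‖X ω - PX ω‖ ^ 2 ∂P :=
        integral_add K1 K2
      calc ∫ ω, ⟪X ω - PX ω, (fun ω => Y ω + r • Z ω) ω - PX ω⟫ ∂P
          = ∫ ω, (⟪X ω - PX ω, Y ω - X ω⟫ + ‖X ω - PX ω‖ ^ 2 + r * ‖X ω - PX ω‖) ∂P :=
            integral_congr_ae (Filter.Eventually.of_forall hpt)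
        _ = _ := by rw [e1, e2, integral_const_mul]
    rw [hsplit] at hvar
    have hflip : ∫ ω, ⟪Y ω - X ω, PX ω - X ω⟫ ∂P
        = - ∫ ω, ⟪X ω - PX ω, Y ω - X ω⟫ ∂P := by
      rw [← integral_neg]
      refine integral_congr_ae (Filter.Eventually.of_forall fun ω => ?_)
      show ⟪Y ω - X ω, PX ω - X ω⟫ = -⟪X ω - PX ω, Y ω - X ω⟫
      rw [show PX ω - X ω = -(X ω - PX ω) by abel, inner_neg_right, real_inner_comm]
    have hnorm : ∫ ω, ‖PX ω - X ω‖ ∂P = ∫ ω, ‖X ω - PX ω‖ ∂P := by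
      exact integral_congr_ae (Filter.Eventually.of_forall fun ω => norm_sub_rev _ _)
    have hsqnn : 0 ≤ ∫ ω, ‖X ω - PX ω‖ ^ 2 ∂P := integral_nonneg fun ω => sq_nonneg _
    rw [hflip, hnorm]
    linarith
  · -- Cauchy–Schwarz
    exact integral_cauchy_schwarz hyx2 (hPX2.sub hX2)
end
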